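/- arXiv:1804.07783 — 2 statements merged into one kernel-verified Lean document; each statement's English description precedes it below -/
import Mathlib

section
/- Let G be a locally compact abelian group with compact subgroup H of Haar measure 1, let a ∈ G, β ∈ Ĝ, and let f(x) = β(x)·𝟙_{a+H}(x). Then the Fourier transform of f is f̂(γ) = (β−γ)(a)·𝟙_{β+H^⊥}(γ), i.e., f̂(γ) = β(a)·γ(a)⁻¹ if γ ∈ β + H^⊥ and f̂(γ) = 0 otherwise. -/
open MeasureTheory Pointwise ComplexConjugate Classical

private lemma circle_mul_conj_eq_one_iff (z w : Circle) :
    (z : ℂ) * conj (w : ℂ) = 1 ↔ w = z := by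
  rw [← Circle.coe_inv_eq_conj, Circle.coe_inv,
    mul_inv_eq_one₀ (Circle.coe_ne_zero w)]
  exact ⟨fun h => Subtype.ext h.symm, fun h => congrArg Subtype.val h.symm⟩

/-- Let `G` be a locally compact abelian (Hausdorff) group with a compact subgroup `H`
whose Haar measure is `1`, let `a ∈ G`, `β ∈ Ĝ`, and let `f = β · 𝟙_{aH}` (written
multiplicatively; additively this is `f(x) = β(x)·𝟙_{a+H}(x)`). Then the Fourier
transform of `f` satisfies `f̂(γ) = β(a)·conj(γ(a))` when `γ` lies in the coset
`β·H^⊥` (equivalently, `γ` agrees with `β` on `H`) and `f̂(γ) = 0` otherwise. -/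
theorem fourierTransform_character_indicator_coset
    {G : Type*} [CommGroup G] [TopologicalSpace G] [IsTopologicalGroup G]
    [LocallyCompactSpace G] [T2Space G] [MeasurableSpace G] [BorelSpace G]
    (μ : Measure G) [μ.IsHaarMeasure]
    (H : Subgroup G) (hHc : IsCompact (H : Set G)) (hμH : μ (H : Set G) = 1)
    (a : G) (β : PontryaginDual G) (γ : PontryaginDual G) :
    (∫ x, (a • (H : Set G)).indicator (fun y => (β y : ℂ)) x * conj ((γ x : ℂ)) ∂μ)
      = if ∀ x ∈ H, γ x = β x then (β a : ℂ) * conj ((γ a : ℂ)) else 0 := by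
  have hHm : MeasurableSet (H : Set G) := hHc.isClosed.measurableSet
  set φ : G → ℂ := fun x => (β x : ℂ) * conj ((γ x : ℂ)) with hφdef
  have hφmul : ∀ x y, φ (x * y) = φ x * φ y := by
    intro x y
    simp only [hφdef, map_mul, Circle.coe_mul, map_mul]
    ring
  have hφone : ∀ x, φ x = 1 ↔ γ x = β x := fun x =>
    circle_mul_conj_eq_one_iff (β x) (γ x)
  -- step 1: translate by a
  have key : ∀ g : G, (fun x => (g • (H : Set G)).indicator (fun y => (β y : ℂ)) (g * x)
      * conj ((γ (g * x) : ℂ))) = fun x => φ g * (H : Set G).indicator φ x := by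
    intro g
    funext x
    have hmem : g * x ∈ g • (H : Set G) ↔ x ∈ (H : Set G) := by
      rw [← smul_eq_mul]; exact Set.smul_mem_smul_set_iff
    by_cases hx : x ∈ (H : Set G)
    · rw [Set.indicator_of_mem (hmem.mpr hx), Set.indicator_of_mem hx]
      show φ (g * x) = φ g * φ x
      exact hφmul g x
    · rw [Set.indicator_of_notMem (fun h => hx (hmem.mp h)),
        Set.indicator_of_notMem hx]
      simp
  have h1 : (∫ x, (a • (H : Set G)).indicator (fun y => (β y : ℂ)) x * conj ((γ x : ℂ)) ∂μ)
      = φ a * ∫ x, (H : Set G).indicator φ x ∂μ := by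
    rw [← integral_mul_left_eq_self
      (fun x => (a • (H : Set G)).indicator (fun y => (β y : ℂ)) x * conj ((γ x : ℂ))) a]
    rw [show (fun x => (a • (H : Set G)).indicator (fun y => (β y : ℂ)) (a * x)
      * conj ((γ (a * x) : ℂ))) = fun x => φ a * (H : Set G).indicator φ x from key a]
    exact integral_const_mul _ _
  rw [h1]
  by_cases hcond : ∀ x ∈ H, γ x = β x
  · rw [if_pos hcond]
    have : (H : Set G).indicator φ = (H : Set G).indicator (fun _ => (1 : ℂ)) := by
      funext x
      by_cases hx : x ∈ (H : Set G)
      · rw [Set.indicator_of_mem hx, Set.indicator_of_mem hx, (hφone x).mpr (hcond x hx)]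
      · rw [Set.indicator_of_notMem hx, Set.indicator_of_notMem hx]
    rw [this, integral_indicator_const _ hHm, measureReal_def, hμH]
    simp [hφdef]
  · rw [if_neg hcond]
    push_neg at hcond
    obtain ⟨h, hhH, hne⟩ := hcond
    have hφh : φ h ≠ 1 := fun h1 => hne ((hφone h).mp h1)
    have hinv : (∫ x, (H : Set G).indicator φ x ∂μ)
        = φ h * ∫ x, (H : Set G).indicator φ x ∂μ := by
      conv_lhs => rw [← integral_mul_left_eq_self ((H : Set G).indicator φ) h]
      have : (fun x => (H : Set G).indicator φ (h * x))
          = fun x => φ h * (H : Set G).indicator φ x := by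
        funext x
        by_cases hx : x ∈ (H : Set G)
        · rw [Set.indicator_of_mem (H.mul_mem hhH hx), Set.indicator_of_mem hx, hφmul]
        · rw [Set.indicator_of_notMem (fun hm => hx (by
            have := H.mul_mem (H.inv_mem hhH) hm
            simpa using this)), Set.indicator_of_notMem hx]
          simp
      rw [this, integral_const_mul]
    have : (φ h - 1) * (∫ x, (H : Set G).indicator φ x ∂μ) = 0 := by
      rw [sub_mul, one_mul, ← hinv, sub_self]
    rcases mul_eq_zero.mp this with h0 | h0
    · exact absurd (by linear_combination h0 : φ h = 1) hφh
    · rw [h0, mul_zero]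
end

section
/- Let G be a LCAG with compact subgroup H (Haar measure μ(H)=1), a ∈ G, β ∈ Ĝ, f(x) = β(x)𝟙_{a+H}(x), and let 𝒞 be a set of coset representatives of Ĝ/H^⊥ with σ_β ∈ 𝒞 the representative of the coset β + H^⊥. Then for any b ∈ G, τ_{[b],𝒞} f(x) = σ_β(b) · f(x − b), i.e., the generalized translation of f by [b] equals the ordinary translation of f by b multiplied by the unimodular constant σ_β(b). -/
open MeasureTheory Pointwise ComplexConjugate Classical
open scoped ENNReal

noncomputable section

/-- The generalized translation operator `τ_{[b],𝒞}` on the Fourier side: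
multiplication by the unimodular weight `w_{[b],𝒞}(γ) = conj(η_γ(b))`. -/
def tau {G : Type*} [CommGroup G] [TopologicalSpace G]
    (η : PontryaginDual G → PontryaginDual G) (b : G)
    (F : PontryaginDual G → ℂ) : PontryaginDual G → ℂ :=
  fun γ => F γ * conj ((η γ b : ℂ))

/-- Let `G` be a LCA group with compact subgroup `H` of Haar measure `1`, `a ∈ G`,
`β ∈ Ĝ`, and `f = β·𝟙_{aH}`. Let `𝒞` be a set of coset representatives of `Ĝ/H^⊥`,
with decomposition `γ = σ_γ · η_γ` (`σ_γ = γ (η γ)⁻¹ ∈ 𝒞`, `η γ ∈ H^⊥`), and let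
`σβ ∈ 𝒞` be the representative of the coset `β·H^⊥`. Then for any `b ∈ G`, the
generalized translate `τ_{[b],𝒞} f` equals `σβ(b)` times the ordinary translate
of `f` by `b`: on the Fourier-transform side, the Fourier transform of
`x ↦ σβ(b)·f(x·b⁻¹)` equals `τ_{[b],𝒞}` applied to `f̂`. -/
theorem tau_of_character_indicator
    {G : Type*} [CommGroup G] [TopologicalSpace G] [IsTopologicalGroup G]
    [LocallyCompactSpace G] [T2Space G] [MeasurableSpace G] [BorelSpace G]
    (μ : Measure G) [μ.IsHaarMeasure]
    (H : Subgroup G) (hHc : IsCompact (H : Set G)) (hμH : μ (H : Set G) = 1)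
    (𝒞 : Set (PontryaginDual G)) (η : PontryaginDual G → PontryaginDual G)
    (hη : ∀ γ, γ * (η γ)⁻¹ ∈ 𝒞 ∧ ∀ x ∈ H, η γ x = 1)
    (huniq : ∀ γ : PontryaginDual G,
      ∃! s : PontryaginDual G, s ∈ 𝒞 ∧ ∀ x ∈ H, (γ * s⁻¹) x = 1)
    (a b : G) (β σβ : PontryaginDual G)
    (hσβ : σβ ∈ 𝒞 ∧ ∀ x ∈ H, (β * σβ⁻¹) x = 1) :
    (fun γ : PontryaginDual G =>
        ∫ x, ((σβ b : ℂ) *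
            (a • (H : Set G)).indicator (fun y => (β y : ℂ)) (x * b⁻¹)) *
          conj ((γ x : ℂ)) ∂μ)
      = tau η b (fun γ : PontryaginDual G =>
          ∫ x, (a • (H : Set G)).indicator (fun y => (β y : ℂ)) x *
            conj ((γ x : ℂ)) ∂μ) := by
  obtain ⟨hσβ𝒞, hσβH⟩ := hσβ
  haveI : μ.IsMulRightInvariant := by
    constructor
    intro g
    have h : (· * g) = (g * ·) := funext fun x => mul_comm x g
    rw [h]
    exact MeasureTheory.map_mul_left_eq_self μ g
  funext γ
  set ind : G → ℂ := (a • (H : Set G)).indicator (fun y => (β y : ℂ)) with hind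
  set F : ℂ := ∫ x, ind x * conj ((γ x : ℂ)) ∂μ with hF
  have hLHS : (∫ x, ((σβ b : ℂ) * ind (x * b⁻¹)) * conj ((γ x : ℂ)) ∂μ)
      = (σβ b : ℂ) * (conj ((γ b : ℂ)) * F) := by
    have h1 : ∀ x : G, ((σβ b : ℂ) * ind (x * b⁻¹)) * conj ((γ x : ℂ))
        = (σβ b : ℂ) * (ind (x * b⁻¹) * conj ((γ x : ℂ))) := fun x => by ring
    simp_rw [h1]
    rw [integral_const_mul]
    congr 1
    calc ∫ x, ind (x * b⁻¹) * conj ((γ x : ℂ)) ∂μ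
        = ∫ x, ind ((x * b) * b⁻¹) * conj ((γ (x * b) : ℂ)) ∂μ :=
          (integral_mul_right_eq_self (fun x => ind (x * b⁻¹) * conj ((γ x : ℂ))) b).symm
      _ = ∫ x, conj ((γ b : ℂ)) * (ind x * conj ((γ x : ℂ))) ∂μ := by
          congr 1
          funext x
          rw [mul_inv_cancel_right, map_mul γ x b, Circle.coe_mul, map_mul]
          ring
      _ = conj ((γ b : ℂ)) * F := integral_const_mul _ _
  rw [hLHS]
  show _ = F * conj ((η γ b : ℂ))
  by_cases hcase : ∀ x ∈ H, (β * γ⁻¹) x = 1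
  · -- γ lies in the coset β·H^⊥, so its representative is σβ and η γ = γ * σβ⁻¹
    have hrep : γ * (η γ)⁻¹ = σβ := by
      obtain ⟨s, _, hu⟩ := huniq β
      have h1 : σβ = s := hu σβ ⟨hσβ𝒞, hσβH⟩
      have h2 : γ * (η γ)⁻¹ = s := by
        refine hu _ ⟨(hη γ).1, fun x hx => ?_⟩
        show β x * (γ x * (η γ x)⁻¹)⁻¹ = 1
        rw [(hη γ).2 x hx]
        have h3 : β x * (γ x)⁻¹ = 1 := hcase x hx
        simpa using h3
      rw [h2, ← h1]
    have h4 : γ b * (η γ b)⁻¹ = σβ b := by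
      show (γ * (η γ)⁻¹) b = σβ b
      rw [hrep]
    have h5 : η γ b = γ b * (σβ b)⁻¹ := by
      rw [eq_mul_inv_iff_mul_eq, ← h4, mul_comm (γ b) ((η γ b)⁻¹), ← mul_assoc,
        mul_inv_cancel, one_mul]
    have hb : (η γ b : ℂ) = (γ b : ℂ) * ((σβ b)⁻¹ : Circle) := by
      rw [h5, Circle.coe_mul]
    rw [hb, Circle.coe_inv_eq_conj, map_mul, Complex.conj_conj]
    ring
  · -- the inner integral F vanishes
    push_neg at hcase
    obtain ⟨h₀, hh₀, hne⟩ := hcase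
    have hmem : ∀ x : G, x * h₀ ∈ a • (H : Set G) ↔ x ∈ a • (H : Set G) := by
      intro x
      rw [Set.mem_smul_set_iff_inv_smul_mem, Set.mem_smul_set_iff_inv_smul_mem]
      show a⁻¹ * (x * h₀) ∈ (H : Set G) ↔ a⁻¹ * x ∈ (H : Set G)
      rw [← mul_assoc]
      exact mul_mem_cancel_right hh₀
    have key : F = ((β * γ⁻¹) h₀ : ℂ) * F := by
      conv_lhs => rw [hF,
        ← integral_mul_right_eq_self (fun x => ind x * conj ((γ x : ℂ))) h₀]
      rw [hF, ← integral_const_mul]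
      congr 1
      funext x
      show ind (x * h₀) * conj ((γ (x * h₀) : ℂ))
          = ((β * γ⁻¹) h₀ : ℂ) * (ind x * conj ((γ x : ℂ)))
      by_cases hx : x ∈ a • (H : Set G)
      · rw [hind, Set.indicator_of_mem ((hmem x).mpr hx), Set.indicator_of_mem hx,
          map_mul β x h₀, Circle.coe_mul, map_mul γ x h₀, Circle.coe_mul, map_mul]
        have hc : (((β * γ⁻¹) h₀ : Circle) : ℂ) = (β h₀ : ℂ) * conj ((γ h₀ : ℂ)) := by
          show (((β h₀) * (γ h₀)⁻¹ : Circle) : ℂ) = _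
          rw [Circle.coe_mul, Circle.coe_inv_eq_conj]
        rw [hc]
        ring
      · rw [hind, Set.indicator_of_notMem (fun h => hx ((hmem x).mp h)),
          Set.indicator_of_notMem hx]
        ring
    have hne' : ((β * γ⁻¹) h₀ : ℂ) ≠ 1 := by
      intro h
      exact hne (Subtype.ext (by simpa using h))
    have hF0 : F = 0 := by
      have h1 : (1 - ((β * γ⁻¹) h₀ : ℂ)) * F = 0 := by linear_combination key
      rcases mul_eq_zero.mp h1 with h | h
      · exact absurd (by linear_combination -h) hne'
      · exact h
    rw [hF0]
    ring
end
end
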